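/- The Frank–Wolfe (conditional gradient) method with steps γ_k = 2/(k+1) on a convex L-smooth function over a convex compact set Q of diameter R satisfies f(x^N) - f* ≤ 2LR²/(N+2) for all N ≥ 2. -/

import Mathlib

lemma fw_line_deriv {n : ℕ} {f : EuclideanSpace ℝ (Fin n) → ℝ}
    {g : EuclideanSpace ℝ (Fin n) → EuclideanSpace ℝ (Fin n)}
    (hgrad : ∀ x, HasGradientAt f (g x) x) (a u : EuclideanSpace ℝ (Fin n)) (t : ℝ) :
    HasDerivAt (fun s : ℝ => f (a + s • u)) (inner ℝ (g (a + t • u)) u : ℝ) t := by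
  have hc : HasDerivAt (fun s : ℝ => a + s • u) u t := by
    simpa using ((hasDerivAt_id t).smul_const u).const_add a
  have := (hgrad (a + t • u)).hasFDerivAt.comp_hasDerivAt t hc
  simpa [InnerProductSpace.toDual_apply_apply, Function.comp_def] using this

/-- Gradient inequality for convex functions. -/
lemma fw_grad_ineq {n : ℕ} {f : EuclideanSpace ℝ (Fin n) → ℝ}
    {g : EuclideanSpace ℝ (Fin n) → EuclideanSpace ℝ (Fin n)}
    (hconv : ConvexOn ℝ Set.univ f)
    (hgrad : ∀ x, HasGradientAt f (g x) x) (a b : EuclideanSpace ℝ (Fin n)) :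
    f a + inner ℝ (g a) (b - a) ≤ f b := by
  set u := b - a with hu
  set φ : ℝ → ℝ := fun s => f (a + s • u) with hφ
  have hd : HasDerivAt φ (inner ℝ (g a) u : ℝ) 0 := by
    simpa using fw_line_deriv hgrad a u 0
  have hφ0 : φ 0 = f a := by simp [hφ]
  have hslope : ∀ t : ℝ, t ∈ Set.Ioc (0:ℝ) 1 → (φ t - φ 0) / t ≤ f b - f a := by
    intro t ht
    have hpt : a + t • u = (1 - t) • a + t • b := by rw [hu]; module
    have hφt : φ t = f ((1 - t) • a + t • b) := by
      rw [hφ]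
      simp only [hpt]
    have h1 : φ t ≤ (1 - t) * f a + t * f b := by
      rw [hφt]
      have := hconv.2 (Set.mem_univ a) (Set.mem_univ b)
        (by linarith [ht.2] : (0:ℝ) ≤ 1 - t) ht.1.le (by ring)
      simpa [smul_eq_mul] using this
    rw [div_le_iff₀ ht.1, hφ0]
    nlinarith [ht.1]
  have htend : Filter.Tendsto (fun t : ℝ => (φ t - φ 0) / t) (nhdsWithin 0 (Set.Ioi 0))
      (nhds (inner ℝ (g a) u : ℝ)) := by
    have h2 := hasDerivWithinAt_iff_tendsto_slope.mp (hd.hasDerivWithinAt (s := Set.Ioi (0:ℝ)))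
    have h3 : Filter.Tendsto (slope φ 0) (nhdsWithin 0 (Set.Ioi 0))
        (nhds (inner ℝ (g a) u : ℝ)) :=
      h2.mono_left (nhdsWithin_mono _ (fun z hz => ⟨hz, ne_of_gt hz⟩))
    refine h3.congr' ?_
    filter_upwards [self_mem_nhdsWithin] with t _
    rw [slope_def_field, sub_zero]
  have hle : (inner ℝ (g a) u : ℝ) ≤ f b - f a := by
    refine le_of_tendsto htend ?_
    filter_upwards [Ioc_mem_nhdsGT one_pos] with t ht
    exact hslope t ht
  linarith

/-- Descent lemma for L-smooth functions on a convex set. -/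
lemma fw_descent {n : ℕ} {f : EuclideanSpace ℝ (Fin n) → ℝ}
    {g : EuclideanSpace ℝ (Fin n) → EuclideanSpace ℝ (Fin n)}
    {Q : Set (EuclideanSpace ℝ (Fin n))} {L : ℝ} (hL : 0 ≤ L)
    (hQconv : Convex ℝ Q)
    (hgrad : ∀ x, HasGradientAt f (g x) x)
    (hLip : ∀ x ∈ Q, ∀ y ∈ Q, ‖g x - g y‖ ≤ L * ‖x - y‖)
    {a b : EuclideanSpace ℝ (Fin n)} (ha : a ∈ Q) (hb : b ∈ Q) :
    f b ≤ f a + inner ℝ (g a) (b - a) + L / 2 * ‖b - a‖ ^ 2 := by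
  set u := b - a with hu
  have hmem : ∀ t : ℝ, t ∈ Set.Icc (0:ℝ) 1 → a + t • u ∈ Q := by
    intro t ht
    have heq : a + t • u = (1 - t) • a + t • b := by rw [hu]; module
    rw [heq]
    exact hQconv ha hb (by linarith [ht.2]) ht.1 (by ring)
  set ψ : ℝ → ℝ := fun t => (inner ℝ (g (a + t • u)) u : ℝ) with hψ
  have hψcont : ContinuousOn ψ (Set.Icc 0 1) := by
    have hlip : LipschitzOnWith (Real.toNNReal (L * ‖u‖ ^ 2)) ψ (Set.Icc 0 1) := by
      rw [lipschitzOnWith_iff_dist_le_mul]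
      intro s hs t ht
      have h1 : dist (ψ s) (ψ t) = |(inner ℝ (g (a + s • u) - g (a + t • u)) u : ℝ)| := by
        rw [Real.dist_eq, hψ]
        congr 1
        rw [inner_sub_left]
      rw [h1]
      calc |(inner ℝ (g (a + s • u) - g (a + t • u)) u : ℝ)|
          ≤ ‖g (a + s • u) - g (a + t • u)‖ * ‖u‖ := abs_real_inner_le_norm _ _
        _ ≤ (L * ‖(a + s • u) - (a + t • u)‖) * ‖u‖ :=
            mul_le_mul_of_nonneg_right (hLip _ (hmem s hs) _ (hmem t ht)) (norm_nonneg _)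
        _ = (L * ‖u‖ ^ 2) * dist s t := by
            have h2 : (a + s • u) - (a + t • u) = (s - t) • u := by module
            rw [h2, norm_smul, Real.dist_eq, Real.norm_eq_abs]
            ring
        _ ≤ Real.toNNReal (L * ‖u‖ ^ 2) * dist s t :=
            mul_le_mul_of_nonneg_right (Real.le_coe_toNNReal _) dist_nonneg
    exact hlip.continuousOn
  have key := intervalIntegral.integral_eq_sub_of_hasDerivAt
    (f := fun s : ℝ => f (a + s • u)) (f' := ψ) (a := 0) (b := 1)
    (fun t _ => fw_line_deriv hgrad a u t)
    (hψcont.intervalIntegrable_of_Icc zero_le_one)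
  have hb1 : a + (1:ℝ) • u = b := by rw [hu]; module
  have hb0 : a + (0:ℝ) • u = a := by module
  have hFTC : f b - f a = ∫ t in (0:ℝ)..1, ψ t := by
    rw [key]
    simp only [hb1, hb0]
  have hbound : ∀ t ∈ Set.Icc (0:ℝ) 1, ψ t ≤ ψ 0 + L * ‖u‖ ^ 2 * t := by
    intro t ht
    have h1 : ψ t - ψ 0 = (inner ℝ (g (a + t • u) - g (a + (0:ℝ) • u)) u : ℝ) := by
      rw [hψ, inner_sub_left]
    have h2 : (inner ℝ (g (a + t • u) - g (a + (0:ℝ) • u)) u : ℝ)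
        ≤ ‖g (a + t • u) - g (a + (0:ℝ) • u)‖ * ‖u‖ := real_inner_le_norm _ _
    have h3 : ‖g (a + t • u) - g (a + (0:ℝ) • u)‖ ≤ L * (t * ‖u‖) := by
      have h4 := hLip _ (hmem t ht) _ (hmem 0 ⟨le_refl 0, zero_le_one⟩)
      have h5 : (a + t • u) - (a + (0:ℝ) • u) = t • u := by module
      rw [h5, norm_smul, Real.norm_eq_abs, abs_of_nonneg ht.1] at h4
      exact h4
    nlinarith [norm_nonneg u, mul_le_mul_of_nonneg_right h3 (norm_nonneg u)]
  have hcont2 : Continuous (fun t : ℝ => ψ 0 + L * ‖u‖ ^ 2 * t) := by fun_prop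
  have hint : (∫ t in (0:ℝ)..1, ψ t) ≤ ∫ t in (0:ℝ)..1, (ψ 0 + L * ‖u‖ ^ 2 * t) :=
    intervalIntegral.integral_mono_on zero_le_one
      (hψcont.intervalIntegrable_of_Icc zero_le_one)
      (hcont2.intervalIntegrable _ _) hbound
  have hval : (∫ t in (0:ℝ)..1, (ψ 0 + L * ‖u‖ ^ 2 * t)) = ψ 0 + L / 2 * ‖u‖ ^ 2 := by
    have i1 : IntervalIntegrable (fun _ : ℝ => ψ 0) MeasureTheory.volume 0 1 :=
      intervalIntegrable_const
    have i2 : IntervalIntegrable (fun t : ℝ => L * ‖u‖ ^ 2 * t) MeasureTheory.volume 0 1 := by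
      apply Continuous.intervalIntegrable; fun_prop
    rw [intervalIntegral.integral_add i1 i2, intervalIntegral.integral_const,
      intervalIntegral.integral_const_mul, integral_id]
    simp
    ring
  have hψ0 : ψ 0 = (inner ℝ (g a) u : ℝ) := by rw [hψ]; simp only [hb0]
  rw [hval, hψ0] at hint
  rw [← hFTC] at hint
  linarith

lemma fw_arith (L R K : ℝ) (hLR : 0 ≤ L * R^2) (hK : 2 ≤ K) :
    (1 - 2/(K+1)) * (2 * L * R ^ 2 / (K + 2)) + L / 2 * (2/(K+1))^2 * R^2
      ≤ 2 * L * R ^ 2 / (K + 3) := by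
  have h1 : (0:ℝ) < K+1 := by linarith
  have h2 : (0:ℝ) < K+2 := by linarith
  have h3 : (0:ℝ) < K+3 := by linarith
  rw [← sub_nonneg]
  have key : 2 * L * R ^ 2 / (K + 3)
      - ((1 - 2/(K+1)) * (2 * L * R ^ 2 / (K + 2)) + L / 2 * (2/(K+1))^2 * R^2)
      = 2*(L*R^2)*(K-1)/((K+1)^2*(K+2)*(K+3)) := by
    field_simp
    ring
  rw [key]
  apply div_nonneg
  · nlinarith
  · positivity


/-- Frank–Wolfe (conditional gradient) method with steps `γ_k = 2/(k+1)` on a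
convex `L`-smooth function over a convex compact set `Q` of diameter `R`:
`f(x^N) - f* ≤ 2LR²/(N+2)` for all `N ≥ 2`. -/
theorem frank_wolfe_rate {n : ℕ} (f : EuclideanSpace ℝ (Fin n) → ℝ)
    (g : EuclideanSpace ℝ (Fin n) → EuclideanSpace ℝ (Fin n))
    (Q : Set (EuclideanSpace ℝ (Fin n))) (L R : ℝ) (hL : 0 < L)
    (hQc : IsCompact Q) (hQconv : Convex ℝ Q) (hQne : Q.Nonempty)
    (hconv : ConvexOn ℝ Set.univ f)
    (hgrad : ∀ x, HasGradientAt f (g x) x)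
    (hLip : ∀ x ∈ Q, ∀ y ∈ Q, ‖g x - g y‖ ≤ L * ‖x - y‖)
    (hdiam : ∀ x ∈ Q, ∀ y ∈ Q, ‖x - y‖ ≤ R)
    (xstar : EuclideanSpace ℝ (Fin n)) (hxstar : xstar ∈ Q)
    (hmin : ∀ z ∈ Q, f xstar ≤ f z)
    (x yv : ℕ → EuclideanSpace ℝ (Fin n)) (hx1 : x 1 ∈ Q)
    (hy : ∀ k, yv k ∈ Q ∧ ∀ z ∈ Q, (inner ℝ (g (x k)) (yv k) : ℝ) ≤ inner ℝ (g (x k)) z)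
    (hstep : ∀ k ≥ 1, x (k + 1)
      = (1 - 2 / ((k : ℝ) + 1)) • x k + (2 / ((k : ℝ) + 1)) • yv k) :
    ∀ N : ℕ, 2 ≤ N → f (x N) - f xstar ≤ 2 * L * R ^ 2 / ((N : ℝ) + 2) := by
  have hR0 : 0 ≤ R := by simpa using hdiam xstar hxstar xstar hxstar
  -- iterates stay in Q
  have hxQ : ∀ k, 1 ≤ k → x k ∈ Q := by
    intro k hk
    induction k with
    | zero => omega
    | succ m ih =>
      rcases Nat.lt_or_ge m 1 with h | h
      · interval_cases m
        exact hx1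
      · rw [hstep m h]
        have hm : (1:ℝ) ≤ (m:ℝ) := by exact_mod_cast h
        have hγ1 : 2 / ((m:ℝ) + 1) ≤ 1 := by
          rw [div_le_one (by linarith)]; linarith
        exact hQconv (ih h) (hy m).1 (by linarith) (by positivity) (by ring)
  -- one-step recursion
  have hrec : ∀ k : ℕ, 1 ≤ k →
      f (x (k+1)) - f xstar ≤ (1 - 2/((k:ℝ)+1)) * (f (x k) - f xstar)
        + L / 2 * (2/((k:ℝ)+1))^2 * R^2 := by
    intro k hk
    set γ : ℝ := 2/((k:ℝ)+1) with hγ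
    have hk1 : (1:ℝ) ≤ (k:ℝ) := by exact_mod_cast hk
    have hγpos : 0 < γ := by rw [hγ]; positivity
    have hγ1 : γ ≤ 1 := by rw [hγ, div_le_one (by linarith)]; linarith
    have haQ : x k ∈ Q := hxQ k hk
    have hbQ : x (k+1) ∈ Q := hxQ (k+1) (by omega)
    have hdiff : x (k+1) - x k = γ • (yv k - x k) := by
      rw [hstep k hk, ← hγ]; module
    have hdesc := fw_descent hL.le hQconv hgrad hLip haQ hbQ
    rw [hdiff] at hdesc
    have hinner : (inner ℝ (g (x k)) (γ • (yv k - x k)) : ℝ)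
        = γ * (inner ℝ (g (x k)) (yv k - x k) : ℝ) := real_inner_smul_right _ _ _
    have hnorm : ‖γ • (yv k - x k)‖ = γ * ‖yv k - x k‖ := by
      rw [norm_smul, Real.norm_eq_abs, abs_of_pos hγpos]
    have hnR : ‖yv k - x k‖ ≤ R := hdiam _ (hy k).1 _ haQ
    -- LMO + convexity
    have hlmo : (inner ℝ (g (x k)) (yv k - x k) : ℝ)
        ≤ (inner ℝ (g (x k)) (xstar - x k) : ℝ) := by
      rw [inner_sub_right, inner_sub_right]
      have := (hy k).2 xstar hxstar
      linarith
    have hcvx := fw_grad_ineq hconv hgrad (x k) xstar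
    have hsq : ‖γ • (yv k - x k)‖^2 ≤ γ^2 * R^2 := by
      rw [hnorm, mul_pow]
      have h1 : ‖yv k - x k‖^2 ≤ R^2 := by nlinarith [norm_nonneg (yv k - x k)]
      nlinarith [sq_nonneg γ]
    have hmain : f (x (k+1)) ≤ f (x k) + γ * (f xstar - f (x k)) + L/2 * (γ^2 * R^2) := by
      calc f (x (k+1)) ≤ f (x k) + (inner ℝ (g (x k)) (γ • (yv k - x k)) : ℝ)
            + L / 2 * ‖γ • (yv k - x k)‖ ^ 2 := hdesc
        _ ≤ f (x k) + γ * (inner ℝ (g (x k)) (xstar - x k) : ℝ) + L/2 * (γ^2 * R^2) := by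
            rw [hinner]
            have := mul_le_mul_of_nonneg_left hlmo hγpos.le
            nlinarith [hL.le]
        _ ≤ f (x k) + γ * (f xstar - f (x k)) + L/2 * (γ^2 * R^2) := by
            have h2 : (inner ℝ (g (x k)) (xstar - x k) : ℝ) ≤ f xstar - f (x k) := by linarith
            nlinarith [mul_le_mul_of_nonneg_left h2 hγpos.le]
    have : L / 2 * γ^2 * R^2 = L/2 * (γ^2 * R^2) := by ring
    rw [this]
    linarith
  -- induction from N = 2
  intro N hN
  induction N, hN using Nat.le_induction with
  | base =>
    have h2 := hrec 1 le_rfl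
    norm_num at h2 ⊢
    have : 2 * L * R ^ 2 / 4 = L / 2 * R^2 * 2^2 / 4 := by ring
    nlinarith [h2]
  | succ m hm ih =>
    have ihm := ih
    have hrecm := hrec m (by omega)
    set K : ℝ := (m:ℝ) with hK
    have hK2 : (2:ℝ) ≤ K := by rw [hK]; exact_mod_cast hm
    have hcast : ((m+1:ℕ):ℝ) = K + 1 := by push_cast [hK]; ring
    have hγ1 : 2 / (K + 1) ≤ 1 := by rw [div_le_one (by linarith)]; linarith
    have hLR : 0 ≤ L * R^2 := by positivity
    have hstep2 : f (x (m+1)) - f xstar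
        ≤ (1 - 2/(K+1)) * (2 * L * R ^ 2 / (K + 2)) + L / 2 * (2/(K+1))^2 * R^2 := by
      have h1 := mul_le_mul_of_nonneg_left ihm (by linarith : (0:ℝ) ≤ 1 - 2/(K+1))
      linarith [hrecm]
    have harith : (1 - 2/(K+1)) * (2 * L * R ^ 2 / (K + 2)) + L / 2 * (2/(K+1))^2 * R^2
        ≤ 2 * L * R ^ 2 / (K + 3) := fw_arith L R K hLR hK2
    rw [hcast]
    have : K + 1 + 2 = K + 3 := by ring
    rw [this]
    linarith
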